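/- The maps Tᵢ on 𝒰ₙ × GL(n,ℂ) satisfy the far commutation relations of the braid group: for all indices i, j with 1 ≤ i, j ≤ n−1 and |i−j| > 1, one has Tᵢ ∘ Tⱼ = Tⱼ ∘ Tᵢ as maps from 𝒰ₙ × GL(n,ℂ) to itself. -/

import Mathlib

open Matrix

/-- The set `𝒰ₙ` of upper triangular `n × n` complex matrices with `1`'s on the diagonal. -/
def upperUnitriangular (n : ℕ) : Set (Matrix (Fin n) (Fin n) ℂ) :=
  {U | (∀ a b : Fin n, b < a → U a b = 0) ∧ ∀ a : Fin n, U a a = 1}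

/-- The matrix `A^{βᵢ}(U)`: identity outside rows/columns `i, i'` (where `i' = i+1`),
with `(i,i)`-entry `0`, `(i,i')`- and `(i',i)`-entries `1`, and `(i',i')`-entry `-U i i'`. -/
def braidMat {n : ℕ} (U : Matrix (Fin n) (Fin n) ℂ) (i i' : Fin n) :
    Matrix (Fin n) (Fin n) ℂ := fun a b =>
  if a = i ∧ b = i' then 1
  else if a = i' ∧ b = i then 1
  else if a = i' ∧ b = i' then -U i i'
  else if a = b ∧ a ≠ i ∧ a ≠ i' then 1
  else 0

/-- The map `Tᵢ(U, C) = (A^{βᵢ}(U)·U·A^{βᵢ}(U), C·A^{βᵢ}(U)⁻¹)`, where the pair `(i, i')`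
consists of the `i`-th and `(i+1)`-th indices. -/
noncomputable def Tmap {n : ℕ} (i i' : Fin n)
    (p : Matrix (Fin n) (Fin n) ℂ × Matrix (Fin n) (Fin n) ℂ) :
    Matrix (Fin n) (Fin n) ℂ × Matrix (Fin n) (Fin n) ℂ :=
  (braidMat p.1 i i' * p.1 * braidMat p.1 i i', p.2 * (braidMat p.1 i i')⁻¹)

lemma braid_eq_one {n : ℕ} (U : Matrix (Fin n) (Fin n) ℂ) (i i' a b : Fin n)
    (h : (a ≠ i ∧ a ≠ i') ∨ (b ≠ i ∧ b ≠ i')) :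
    braidMat U i i' a b = (1 : Matrix (Fin n) (Fin n) ℂ) a b := by
  unfold braidMat
  rcases h with ⟨h1, h2⟩ | ⟨h1, h2⟩ <;> simp [Matrix.one_apply, h1, h2] <;>
    split_ifs <;> simp_all

lemma braid_commute {n : ℕ} (U V : Matrix (Fin n) (Fin n) ℂ) (i i' j j' : Fin n)
    (h1 : i ≠ j) (h2 : i ≠ j') (h3 : i' ≠ j) (h4 : i' ≠ j') :
    braidMat U i i' * braidMat V j j' = braidMat V j j' * braidMat U i i' := by
  set A := braidMat U i i' with hA
  set B := braidMat V j j' with hB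
  have key : ∀ X Y : Matrix (Fin n) (Fin n) ℂ, (X - 1) * (Y - 1) = 0 → X * Y = X + Y - 1 := by
    intro X Y h
    have h2 : X * Y - (X + Y - 1) = (X - 1) * (Y - 1) := by noncomm_ring
    rw [h] at h2
    exact sub_eq_zero.mp h2
  have hEF : (A - 1) * (B - 1) = 0 := by
    ext a b
    simp only [Matrix.mul_apply, Matrix.zero_apply]
    apply Finset.sum_eq_zero
    intro c _
    by_cases hc : c = j ∨ c = j'
    · have hc' : c ≠ i ∧ c ≠ i' := by
        rcases hc with rfl | rfl
        · exact ⟨fun h => h1 h.symm, fun h => h3 h.symm⟩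
        · exact ⟨fun h => h2 h.symm, fun h => h4 h.symm⟩
      have : A a c = (1 : Matrix (Fin n) (Fin n) ℂ) a c :=
        braid_eq_one U i i' a c (Or.inr hc')
      simp [Matrix.sub_apply, this]
    · push_neg at hc
      have : B c b = (1 : Matrix (Fin n) (Fin n) ℂ) c b :=
        braid_eq_one V j j' c b (Or.inl hc)
      simp [Matrix.sub_apply, this]
  have hFE : (B - 1) * (A - 1) = 0 := by
    ext a b
    simp only [Matrix.mul_apply, Matrix.zero_apply]
    apply Finset.sum_eq_zero
    intro c _
    by_cases hc : c = i ∨ c = i'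
    · have hc' : c ≠ j ∧ c ≠ j' := by
        rcases hc with rfl | rfl
        · exact ⟨h1, h2⟩
        · exact ⟨h3, h4⟩
      have : B a c = (1 : Matrix (Fin n) (Fin n) ℂ) a c :=
        braid_eq_one V j j' a c (Or.inr hc')
      simp [Matrix.sub_apply, this]
    · push_neg at hc
      have : A c b = (1 : Matrix (Fin n) (Fin n) ℂ) c b :=
        braid_eq_one U i i' c b (Or.inl hc)
      simp [Matrix.sub_apply, this]
  rw [key A B hEF, key B A hFE, add_comm A B]

lemma braidMat_congr {n : ℕ} (U V : Matrix (Fin n) (Fin n) ℂ) (i i' : Fin n)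
    (h : U i i' = V i i') : braidMat U i i' = braidMat V i i' := by
  unfold braidMat
  ext a b
  rw [h]

lemma braid_mul_apply {n : ℕ} (V M : Matrix (Fin n) (Fin n) ℂ) (j j' a b : Fin n)
    (h1 : a ≠ j) (h2 : a ≠ j') : (braidMat V j j' * M) a b = M a b := by
  rw [Matrix.mul_apply]
  rw [Finset.sum_congr rfl (fun c _ => by
    rw [braid_eq_one V j j' a c (Or.inl ⟨h1, h2⟩)])]
  simp [Matrix.one_apply]

lemma mul_braid_apply {n : ℕ} (V M : Matrix (Fin n) (Fin n) ℂ) (j j' a b : Fin n)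
    (h1 : b ≠ j) (h2 : b ≠ j') : (M * braidMat V j j') a b = M a b := by
  rw [Matrix.mul_apply]
  rw [Finset.sum_congr rfl (fun c _ => by
    rw [braid_eq_one V j j' c b (Or.inr ⟨h1, h2⟩)])]
  simp [Matrix.one_apply]

theorem stmt1 (n : ℕ) (i j : Fin n) (hi : (i : ℕ) + 1 < n) (hj : (j : ℕ) + 1 < n)
    (hij : (i : ℕ) + 1 < j ∨ (j : ℕ) + 1 < i)
    (U C : Matrix (Fin n) (Fin n) ℂ)
    (hU : U ∈ upperUnitriangular n) (hC : IsUnit C) :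
    Tmap i ⟨(i : ℕ) + 1, hi⟩ (Tmap j ⟨(j : ℕ) + 1, hj⟩ (U, C)) =
      Tmap j ⟨(j : ℕ) + 1, hj⟩ (Tmap i ⟨(i : ℕ) + 1, hi⟩ (U, C)) := by
  set i' : Fin n := ⟨(i : ℕ) + 1, hi⟩ with hi'
  set j' : Fin n := ⟨(j : ℕ) + 1, hj⟩ with hj'
  have d1 : i ≠ j := by rw [Fin.ne_iff_vne]; omega
  have d2 : i ≠ j' := by rw [Fin.ne_iff_vne]; simp [hj']; omega
  have d3 : i' ≠ j := by rw [Fin.ne_iff_vne]; simp [hi']; omega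
  have d4 : i' ≠ j' := by rw [Fin.ne_iff_vne]; simp [hi', hj']; omega
  set A := braidMat U i i' with hA
  set B := braidMat U j j' with hB
  have hcomm : A * B = B * A := braid_commute U U i i' j j' d1 d2 d3 d4
  have hAeq : braidMat (B * U * B) i i' = A := by
    apply braidMat_congr
    rw [mul_braid_apply U (B * U) j j' i i' d3 d4,
        braid_mul_apply U U j j' i i' d1 d2]
  have hBeq : braidMat (A * U * A) j j' = B := by
    apply braidMat_congr
    rw [mul_braid_apply U (A * U) i i' j j' d2.symm d4.symm,
        braid_mul_apply U U i i' j j' d1.symm d3.symm]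
  have hinv : A⁻¹ * B⁻¹ = B⁻¹ * A⁻¹ := by
    rw [Matrix.nonsing_inv_eq_ringInverse, Matrix.nonsing_inv_eq_ringInverse]
    exact (Commute.ringInverse_ringInverse hcomm).eq
  simp only [Tmap, ← hA, ← hB, hAeq, hBeq]
  have hfst : A * (B * U * B) * A = B * (A * U * A) * B := by
    calc A * (B * U * B) * A = (A * B) * U * (B * A) := by noncomm_ring
      _ = (B * A) * U * (A * B) := by rw [hcomm]
      _ = B * (A * U * A) * B := by noncomm_ring
  rw [Prod.mk.injEq]
  exact ⟨hfst, by rw [mul_assoc, mul_assoc, hinv]⟩
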